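/- Let 0 ≤ R < 1 and let c : [R,1] → (0,∞) be C^{1,1} and satisfy the Herglotz condition. If f : [R,1] → ℝ is continuous and Af(r) = 0 for every r in some dense subset of (R,1), where Af(r) = ∫_r^1 (f(s)/c(s)) · (1 − (r c(s)/(s c(r)))^2)^{-1/2} ds, then f vanishes identically on [R,1]. -/

import Mathlib

/-- `c` is `C^{1,1}` on `[R,1]`: differentiable with Lipschitz derivative. -/
def IsC11On (c : ℝ → ℝ) (R : ℝ) : Prop :=
  ∃ c' : ℝ → ℝ, ∃ K : NNReal,
    (∀ r ∈ Set.Icc R 1, HasDerivWithinAt c (c' r) (Set.Icc R 1) r) ∧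
    LipschitzOnWith K c' (Set.Icc R 1)

/-- The Herglotz condition: `d/dr (r / c r) > 0` on `[R,1]`. -/
def HerglotzCond (c : ℝ → ℝ) (R : ℝ) : Prop :=
  ∀ r ∈ Set.Icc R 1, 0 < derivWithin (fun s => s / c s) (Set.Icc R 1) r

/-- Half length `L(r)` of the maximal geodesic of radius `r`. -/
noncomputable def Lfun (c : ℝ → ℝ) (r : ℝ) : ℝ :=
  ∫ s in r..1, (c s)⁻¹ * (Real.sqrt (1 - (r * c s / (s * c r)) ^ 2))⁻¹

/-- Half of the angular distance `α(r)` between the endpoints of the maximal geodesic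
of radius `r`. -/
noncomputable def alphaFun (c : ℝ → ℝ) (r : ℝ) : ℝ :=
  ∫ s in r..1, (r * c s) / (c r * s ^ 2) * (Real.sqrt (1 - (r * c s / (s * c r)) ^ 2))⁻¹

/-- The Abel-type transform of a radial function `f` over the maximal geodesic of
radius `r`. -/
noncomputable def Afun (c : ℝ → ℝ) (f : ℝ → ℝ) (r : ℝ) : ℝ :=
  ∫ s in r..1, (f s / c s) * (Real.sqrt (1 - (r * c s / (s * c r)) ^ 2))⁻¹


open Set MeasureTheory intervalIntegral Real

namespace S10

noncomputable def pp (c : ℝ → ℝ) (s : ℝ) : ℝ := s / c s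
noncomputable def qq (c c' : ℝ → ℝ) (r : ℝ) : ℝ := (1 * c r - r * c' r) / (c r) ^ 2

structure Setup (R : ℝ) (c c' : ℝ → ℝ) (m : ℝ) : Prop where
  hR0 : 0 ≤ R
  hR1 : R < 1
  hpos : ∀ r ∈ Set.Icc R 1, 0 < c r
  hderiv : ∀ r ∈ Set.Icc R 1, HasDerivWithinAt c (c' r) (Set.Icc R 1) r
  hc'cont : ContinuousOn c' (Set.Icc R 1)
  hm : 0 < m
  hqm : ∀ r ∈ Set.Icc R 1, m ≤ qq c c' r

variable {R m : ℝ} {c c' : ℝ → ℝ}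

theorem Setup.ccont (h : Setup R c c' m) : ContinuousOn c (Set.Icc R 1) :=
  fun r hr => (h.hderiv r hr).continuousWithinAt

theorem Setup.pderiv (h : Setup R c c' m) :
    ∀ r ∈ Set.Icc R 1, HasDerivWithinAt (pp c) (qq c c' r) (Set.Icc R 1) r := by
  intro r hr
  exact (hasDerivWithinAt_id r _).div (h.hderiv r hr) (h.hpos r hr).ne'

theorem Setup.pcont (h : Setup R c c' m) : ContinuousOn (pp c) (Set.Icc R 1) :=
  fun r hr => (h.pderiv r hr).continuousWithinAt

theorem Setup.pmono (h : Setup R c c' m) : StrictMonoOn (pp c) (Set.Icc R 1) := by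
  apply strictMonoOn_of_hasDerivWithinAt_pos (convex_Icc R 1) h.pcont
    (f' := qq c c')
  · intro x hx
    exact (h.pderiv x (interior_subset hx)).mono interior_subset
  · intro x hx
    exact h.hm.trans_le (h.hqm x (interior_subset hx))

theorem Setup.pgrow (h : Setup R c c' m) :
    ∀ a ∈ Set.Icc R 1, ∀ b ∈ Set.Icc R 1, a ≤ b →
      m * (b - a) ≤ pp c b - pp c a := by
  intro a ha b hb hab
  have hmono : MonotoneOn (fun x => pp c x - m * x) (Set.Icc R 1) := by
    apply monotoneOn_of_hasDerivWithinAt_nonneg (convex_Icc R 1)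
      (f' := fun x => qq c c' x - m)
    · exact (h.pcont.sub (continuousOn_const.mul continuousOn_id))
    · intro x hx
      have h1 : HasDerivWithinAt (fun y => m * y) (m * 1) (interior (Set.Icc R 1)) x :=
        (hasDerivWithinAt_id x _).const_mul m
      rw [mul_one] at h1
      exact ((h.pderiv x (interior_subset hx)).mono interior_subset).sub h1
    · intro x hx
      simp only [sub_nonneg]
      exact h.hqm x (interior_subset hx)
  have := hmono ha hb hab
  simp only at this
  nlinarith [this]

theorem Setup.ppos (h : Setup R c c' m) : ∀ r ∈ Set.Icc R 1, 0 < r → 0 < pp c r := by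
  intro r hr h0
  exact div_pos h0 (h.hpos r hr)

theorem Setup.pnonneg (h : Setup R c c' m) : ∀ r ∈ Set.Icc R 1, 0 ≤ pp c r := by
  intro r hr
  exact div_nonneg (h.hR0.trans hr.1) (h.hpos r hr).le

theorem Setup.phasDerivAt (h : Setup R c c' m) {r : ℝ} (hr : r ∈ Set.Ioo R 1) :
    HasDerivAt (pp c) (qq c c' r) r := by
  have : Set.Icc R 1 ∈ nhds r := Icc_mem_nhds hr.1 hr.2
  exact (h.pderiv r (Ioo_subset_Icc_self hr)).hasDerivAt this

theorem Setup.qcont (h : Setup R c c' m) : ContinuousOn (qq c c') (Set.Icc R 1) := by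
  apply ContinuousOn.div
  · exact (continuousOn_const.mul h.ccont).sub (continuousOn_id.mul h.hc'cont)
  · exact h.ccont.pow 2
  · intro x hx
    exact pow_ne_zero 2 (h.hpos x hx).ne'

/-- Construct the setup from the theorem's hypotheses. -/
theorem setup_exists (R : ℝ) (hR0 : 0 ≤ R) (hR1 : R < 1) (c : ℝ → ℝ)
    (hpos : ∀ r ∈ Set.Icc R 1, 0 < c r)
    (hC11 : IsC11On c R) (hHerg : HerglotzCond c R) :
    ∃ c' m, Setup R c c' m := by
  obtain ⟨c', K, hderiv, hlip⟩ := hC11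
  have hc'cont : ContinuousOn c' (Set.Icc R 1) := hlip.continuousOn
  have hq : ∀ r ∈ Set.Icc R 1, 0 < qq c c' r := by
    intro r hr
    have hd : HasDerivWithinAt (fun s => s / c s) (qq c c' r) (Set.Icc R 1) r :=
      (hasDerivWithinAt_id r _).div (hderiv r hr) (hpos r hr).ne'
    have := hd.derivWithin (uniqueDiffOn_Icc hR1 r hr)
    rw [← this]
    exact hHerg r hr
  have hcont : ContinuousOn (qq c c') (Set.Icc R 1) := by
    apply ContinuousOn.div
    · have hcc : ContinuousOn c (Set.Icc R 1) := fun r hr => (hderiv r hr).continuousWithinAt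
      exact (continuousOn_const.mul hcc).sub (continuousOn_id.mul hc'cont)
    · have hcc : ContinuousOn c (Set.Icc R 1) := fun r hr => (hderiv r hr).continuousWithinAt
      exact hcc.pow 2
    · intro x hx
      exact pow_ne_zero 2 (hpos x hx).ne'
  obtain ⟨x, hx, hmin⟩ := isCompact_Icc.exists_isMinOn (Set.nonempty_Icc.2 hR1.le) hcont
  exact ⟨c', qq c c' x, ⟨hR0, hR1, hpos, hderiv, hc'cont, hq x hx, fun r hr => hmin hr⟩⟩


/-- `(√(x-a))⁻¹` is interval integrable on `[a,b]` for `a ≤ b`. -/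
theorem II_inv_sqrt_left {a b : ℝ} (hab : a ≤ b) :
    IntervalIntegrable (fun x => (Real.sqrt (x - a))⁻¹) volume a b := by
  have h1 : IntervalIntegrable (fun x : ℝ => x ^ (-(1/2) : ℝ)) volume 0 (b - a) :=
    intervalIntegrable_rpow' (by norm_num)
  have h2 := h1.comp_sub_right a
  simp only [zero_add, sub_add_cancel] at h2
  apply h2.congr
  rw [uIoc_of_le hab]
  intro x hx
  have hx0 : 0 ≤ x - a := by linarith [hx.1]
  show (x - a) ^ (-(1/2) : ℝ) = (Real.sqrt (x - a))⁻¹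
  rw [Real.rpow_neg hx0, Real.sqrt_eq_rpow]

/-- `(√(b-x))⁻¹` is interval integrable on `[a,b]` for `a ≤ b`. -/
theorem II_inv_sqrt_right {a b : ℝ} (hab : a ≤ b) :
    IntervalIntegrable (fun x => (Real.sqrt (b - x))⁻¹) volume a b := by
  have h1 : IntervalIntegrable (fun x : ℝ => (Real.sqrt (x - a))⁻¹) volume a b :=
    II_inv_sqrt_left hab
  have h2 := h1.comp_sub_left (a + b)
  simp only [add_sub_cancel_right, add_sub_cancel_left] at h2
  apply h2.symm.congr
  intro x _
  ring_nf

/-- the two-sided inverse-sqrt kernel is interval integrable on `[a,b]`. -/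
theorem II_two_sided {a b : ℝ} (hab : a < b) :
    IntervalIntegrable (fun x => (Real.sqrt (x - a))⁻¹ * (Real.sqrt (b - x))⁻¹)
      volume a b := by
  set mid := (a + b) / 2 with hmid
  have ham : a < mid := by simp only [hmid]; linarith
  have hmb : mid < b := by simp only [hmid]; linarith
  have piece1 : IntervalIntegrable
      (fun x => (Real.sqrt (x - a))⁻¹ * (Real.sqrt (b - x))⁻¹) volume a mid := by
    have hdom : IntervalIntegrable
        (fun x => (Real.sqrt (x - a))⁻¹ * (Real.sqrt (b - mid))⁻¹) volume a mid :=
      (II_inv_sqrt_left ham.le).mul_const _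
    rw [intervalIntegrable_iff_integrableOn_Ioo_of_le ham.le] at hdom ⊢
    apply hdom.integrable.mono
    · apply ContinuousOn.aestronglyMeasurable _ measurableSet_Ioo
      apply ContinuousOn.mul
      · apply ContinuousOn.inv₀ ((Real.continuous_sqrt.comp (continuous_sub_right a)).continuousOn)
        intro x hx
        exact (Real.sqrt_pos.2 (show (0:ℝ) < x - a by linarith [hx.1])).ne'
      · apply ContinuousOn.inv₀ ((Real.continuous_sqrt.comp (continuous_const.sub continuous_id)).continuousOn)
        intro x hx
        exact (Real.sqrt_pos.2 (show (0:ℝ) < b - x by linarith [hx.2, hmb])).ne'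
    · filter_upwards [ae_restrict_mem measurableSet_Ioo] with x hx
      have h1 : (0:ℝ) ≤ (Real.sqrt (x - a))⁻¹ := inv_nonneg.2 (Real.sqrt_nonneg _)
      have h2 : (Real.sqrt (b - x))⁻¹ ≤ (Real.sqrt (b - mid))⁻¹ := by
        apply inv_anti₀ (Real.sqrt_pos.2 (by linarith))
        exact Real.sqrt_le_sqrt (by linarith [hx.2])
      rw [Real.norm_eq_abs, Real.norm_eq_abs, abs_of_nonneg (mul_nonneg h1 (inv_nonneg.2 (Real.sqrt_nonneg _))),
        abs_of_nonneg (mul_nonneg h1 (inv_nonneg.2 (Real.sqrt_nonneg _)))]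
      exact mul_le_mul_of_nonneg_left h2 h1
  have piece2 : IntervalIntegrable
      (fun x => (Real.sqrt (x - a))⁻¹ * (Real.sqrt (b - x))⁻¹) volume mid b := by
    have hdom : IntervalIntegrable
        (fun x => (Real.sqrt (mid - a))⁻¹ * (Real.sqrt (b - x))⁻¹) volume mid b :=
      (II_inv_sqrt_right hmb.le).const_mul _
    rw [intervalIntegrable_iff_integrableOn_Ioo_of_le hmb.le] at hdom ⊢
    apply hdom.integrable.mono
    · apply ContinuousOn.aestronglyMeasurable _ measurableSet_Ioo
      apply ContinuousOn.mul
      · apply ContinuousOn.inv₀ ((Real.continuous_sqrt.comp (continuous_sub_right a)).continuousOn)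
        intro x hx
        exact (Real.sqrt_pos.2 (show (0:ℝ) < x - a by linarith [hx.1, ham])).ne'
      · apply ContinuousOn.inv₀ ((Real.continuous_sqrt.comp (continuous_const.sub continuous_id)).continuousOn)
        intro x hx
        exact (Real.sqrt_pos.2 (show (0:ℝ) < b - x by linarith [hx.2])).ne'
    · filter_upwards [ae_restrict_mem measurableSet_Ioo] with x hx
      have h2 : (0:ℝ) ≤ (Real.sqrt (b - x))⁻¹ := inv_nonneg.2 (Real.sqrt_nonneg _)
      have h1 : (Real.sqrt (x - a))⁻¹ ≤ (Real.sqrt (mid - a))⁻¹ := by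
        apply inv_anti₀ (Real.sqrt_pos.2 (by linarith))
        exact Real.sqrt_le_sqrt (by linarith [hx.1])
      rw [Real.norm_eq_abs, Real.norm_eq_abs,
        abs_of_nonneg (mul_nonneg (inv_nonneg.2 (Real.sqrt_nonneg _)) h2),
        abs_of_nonneg (mul_nonneg (inv_nonneg.2 (Real.sqrt_nonneg _)) h2)]
      exact mul_le_mul_of_nonneg_right h1 h2
  exact piece1.trans piece2

/-- Master integrability criterion: a function continuous on `(a,b)` and dominated by
`C/(√(x-a)·√(b-x))` is interval integrable on `[a,b]`. -/
theorem II_of_bound {a b C : ℝ} (hab : a < b) {φ : ℝ → ℝ}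
    (hcont : ContinuousOn φ (Ioo a b))
    (hbd : ∀ x ∈ Ioo a b, |φ x| ≤ C * ((Real.sqrt (x - a))⁻¹ * (Real.sqrt (b - x))⁻¹)) :
    IntervalIntegrable φ volume a b := by
  have hdom := (II_two_sided hab).const_mul C
  rw [intervalIntegrable_iff_integrableOn_Ioo_of_le hab.le] at hdom ⊢
  apply hdom.integrable.mono
  · exact hcont.aestronglyMeasurable measurableSet_Ioo
  · filter_upwards [ae_restrict_mem measurableSet_Ioo] with x hx
    rw [Real.norm_eq_abs, Real.norm_eq_abs]
    exact (hbd x hx).trans (le_abs_self _)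





variable {R m : ℝ} {c c' : ℝ → ℝ}

/-- One-sided bound version of the master integrability criterion. -/
theorem II_of_bound_left {a b C : ℝ} (hab : a < b) {φ : ℝ → ℝ}
    (hcont : ContinuousOn φ (Ioo a b))
    (hbd : ∀ x ∈ Ioo a b, |φ x| ≤ C * (Real.sqrt (x - a))⁻¹) :
    IntervalIntegrable φ volume a b := by
  have hdom := (II_inv_sqrt_left hab.le).const_mul C
  rw [intervalIntegrable_iff_integrableOn_Ioo_of_le hab.le] at hdom ⊢
  apply hdom.integrable.mono
  · exact hcont.aestronglyMeasurable measurableSet_Ioo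
  · filter_upwards [ae_restrict_mem measurableSet_Ioo] with x hx
    rw [Real.norm_eq_abs, Real.norm_eq_abs]
    exact (hbd x hx).trans (le_abs_self _)

theorem kernel_eq (h : Setup R c c' m) {r s : ℝ} (hr : r ∈ Set.Icc R 1)
    (hs : s ∈ Set.Icc R 1) (hrs : r < s) :
    (Real.sqrt (1 - (r * c s / (s * c r)) ^ 2))⁻¹ =
      pp c s * (Real.sqrt ((pp c s) ^ 2 - (pp c r) ^ 2))⁻¹ := by
  have hr0 : 0 ≤ r := h.hR0.trans hr.1
  have hs0 : 0 < s := lt_of_le_of_lt hr0 hrs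
  have hcr : 0 < c r := h.hpos r hr
  have hcs : 0 < c s := h.hpos s hs
  have hb : 0 < pp c s := div_pos hs0 hcs
  have ha0 : 0 ≤ pp c r := div_nonneg hr0 hcr.le
  have hab : pp c r < pp c s := h.pmono hr hs hrs
  have key : r * c s / (s * c r) = pp c r / pp c s := by
    simp only [pp]
    field_simp
  rw [key]
  have h1 : 1 - (pp c r / pp c s) ^ 2 = ((pp c s) ^ 2 - (pp c r) ^ 2) / (pp c s) ^ 2 := by
    field_simp
  rw [h1, Real.sqrt_div (by nlinarith : (0:ℝ) ≤ (pp c s) ^ 2 - (pp c r) ^ 2),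
    Real.sqrt_sq hb.le]
  rw [inv_div, div_eq_mul_inv]

theorem sq_diff_lower (h : Setup R c c' m) {x a b : ℝ} (hx : x ∈ Set.Icc R 1)
    (ha : a ∈ Set.Icc R 1) (hb : b ∈ Set.Icc R 1) (hxa : x ≤ a) (hab : a ≤ b) :
    m * pp c x * (b - a) ≤ (pp c b) ^ 2 - (pp c a) ^ 2 := by
  have h1 := h.pgrow a ha b hb hab
  have h2 : pp c x ≤ pp c a := by
    rcases eq_or_lt_of_le hxa with rfl | hlt
    · exact le_refl _
    · exact (h.pmono hx ha hlt).le
  have h3 : 0 ≤ pp c x := h.pnonneg x hx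
  have h4 : 0 ≤ pp c a := h.pnonneg a ha
  have h7 : 0 ≤ pp c b := h.pnonneg b hb
  have h5 : pp c x ≤ pp c b + pp c a := by linarith
  have h6 : (0:ℝ) ≤ m * (b - a) := mul_nonneg h.hm.le (by linarith)
  have key := mul_le_mul h1 h5 h3 (by linarith : (0:ℝ) ≤ pp c b - pp c a)
  nlinarith [key]

/-- Bound the inverse square-root kernel by an explicit one-sided singular kernel. -/
theorem inv_sqrt_bound (h : Setup R c c' m) {x a b : ℝ} (hx : x ∈ Set.Icc R 1)
    (ha : a ∈ Set.Icc R 1) (hb : b ∈ Set.Icc R 1) (hxa : x ≤ a) (hab : a < b)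
    (hpx : 0 < pp c x) :
    (Real.sqrt ((pp c b) ^ 2 - (pp c a) ^ 2))⁻¹ ≤
      (Real.sqrt (m * pp c x))⁻¹ * (Real.sqrt (b - a))⁻¹ := by
  have hA : 0 < m * pp c x * (b - a) :=
    mul_pos (mul_pos h.hm hpx) (sub_pos.2 hab)
  have hle : m * pp c x * (b - a) ≤ (pp c b) ^ 2 - (pp c a) ^ 2 :=
    sq_diff_lower h hx ha hb hxa hab.le
  have := inv_anti₀ (Real.sqrt_pos.2 hA) (Real.sqrt_le_sqrt hle)
  rw [Real.sqrt_mul (mul_pos h.hm hpx).le] at this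
  rwa [mul_inv] at this

/-- Interval integrability of the Abel-kernel-weighted integrand in the outer variable. -/
theorem II_kernel_right (h : Setup R c c' m) {g : ℝ → ℝ}
    (hg : ContinuousOn g (Set.Icc R 1)) {r : ℝ} (hr : r ∈ Set.Ioo R 1) :
    IntervalIntegrable (fun s => g s * (Real.sqrt ((pp c s) ^ 2 - (pp c r) ^ 2))⁻¹)
      volume r 1 := by
  obtain ⟨Cg, hCg⟩ := isCompact_Icc.exists_bound_of_continuousOn hg
  have hrI : r ∈ Set.Icc R 1 := ⟨hr.1.le, hr.2.le⟩
  have hpr : 0 < pp c r := div_pos (lt_of_le_of_lt h.hR0 hr.1) (h.hpos r hrI)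
  apply II_of_bound_left (C := Cg * (Real.sqrt (m * pp c r))⁻¹) hr.2
  · apply ContinuousOn.mul
    · exact hg.mono (fun s hs => ⟨hr.1.le.trans hs.1.le, hs.2.le⟩)
    · apply ContinuousOn.inv₀
      · apply ContinuousOn.sqrt
        apply ContinuousOn.sub
        · exact ((h.pcont.mono (fun s hs => ⟨hr.1.le.trans hs.1.le, hs.2.le⟩)).pow 2)
        · exact continuousOn_const
      · intro s hs
        have hsI : s ∈ Set.Icc R 1 := ⟨hr.1.le.trans hs.1.le, hs.2.le⟩
        have : pp c r < pp c s := h.pmono hrI hsI hs.1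
        have h0 : 0 ≤ pp c r := h.pnonneg r hrI
        exact (Real.sqrt_pos.2 (by nlinarith)).ne'
  · intro s hs
    have hsI : s ∈ Set.Icc R 1 := ⟨hr.1.le.trans hs.1.le, hs.2.le⟩
    rw [abs_mul]
    have h1 : |g s| ≤ Cg := by
      have := hCg s hsI; rwa [Real.norm_eq_abs] at this
    have h2 : |(Real.sqrt ((pp c s) ^ 2 - (pp c r) ^ 2))⁻¹| ≤
        (Real.sqrt (m * pp c r))⁻¹ * (Real.sqrt (s - r))⁻¹ := by
      rw [abs_of_nonneg (inv_nonneg.2 (Real.sqrt_nonneg _))]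
      exact inv_sqrt_bound h hrI hrI hsI le_rfl hs.1 hpr
    calc |g s| * |(Real.sqrt ((pp c s) ^ 2 - (pp c r) ^ 2))⁻¹|
        ≤ Cg * ((Real.sqrt (m * pp c r))⁻¹ * (Real.sqrt (s - r))⁻¹) := by
          apply mul_le_mul h1 h2 (abs_nonneg _) ((abs_nonneg _).trans h1)
      _ = Cg * (Real.sqrt (m * pp c r))⁻¹ * (Real.sqrt (s - r))⁻¹ := by ring





variable {R m : ℝ} {c c' f : ℝ → ℝ}

theorem gcont (h : Setup R c c' m) (hf : ContinuousOn f (Set.Icc R 1)) :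
    ContinuousOn (fun s => f s / c s * pp c s) (Set.Icc R 1) :=
  (hf.div h.ccont fun x hx => (h.hpos x hx).ne').mul h.pcont

/-- Rewrite `Afun` using the profile function `pp`. -/
theorem Afun_eq (h : Setup R c c' m) (f : ℝ → ℝ) {r : ℝ} (hr : r ∈ Set.Ioo R 1) :
    Afun c f r = ∫ s in r..(1:ℝ),
      (f s / c s * pp c s) * (Real.sqrt ((pp c s) ^ 2 - (pp c r) ^ 2))⁻¹ := by
  apply intervalIntegral.integral_congr_ae
  apply Filter.Eventually.of_forall
  intro s hs
  rw [uIoc_of_le hr.2.le] at hs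
  have hrI : r ∈ Set.Icc R 1 := ⟨hr.1.le, hr.2.le⟩
  have hsI : s ∈ Set.Icc R 1 := ⟨hr.1.le.trans hs.1.le, hs.2⟩
  rw [kernel_eq h hrI hsI hs.1]
  ring

/-- Substituted representation of `Afun` on a fixed domain `[0,1]`. -/
theorem Afun_rep (h : Setup R c c' m) (f : ℝ → ℝ) {r : ℝ} (hr : r ∈ Set.Ioo R 1) :
    Afun c f r = (1 - r) • ∫ τ in (0:ℝ)..1,
      (fun s => (f s / c s * pp c s) * (Real.sqrt ((pp c s) ^ 2 - (pp c r) ^ 2))⁻¹)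
        ((1 - r) * τ + r) := by
  rw [Afun_eq h f hr]
  rw [intervalIntegral.integral_comp_mul_add
    (f := fun s => (f s / c s * pp c s) * (Real.sqrt ((pp c s) ^ 2 - (pp c r) ^ 2))⁻¹)
    (by linarith [hr.2] : (1:ℝ) - r ≠ 0) r]
  simp only [mul_zero, zero_add, mul_one, smul_smul]
  rw [mul_inv_cancel₀ (by linarith [hr.2] : (1:ℝ) - r ≠ 0), one_smul]
  norm_num

/-- `Afun` is continuous within `(R,1)` at each of its points. -/
theorem Afun_contWithin (h : Setup R c c' m) (hf : ContinuousOn f (Set.Icc R 1))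
    {r₀ : ℝ} (hr₀ : r₀ ∈ Set.Ioo R 1) :
    ContinuousWithinAt (Afun c f) (Set.Ioo R 1) r₀ := by
  set g : ℝ → ℝ := fun s => f s / c s * pp c s with hg
  have hgc : ContinuousOn g (Set.Icc R 1) := gcont h hf
  obtain ⟨Cg, hCg⟩ := isCompact_Icc.exists_bound_of_continuousOn hgc
  set Φ : ℝ → ℝ → ℝ := fun r τ =>
    g ((1 - r) * τ + r) * (Real.sqrt ((pp c ((1 - r) * τ + r)) ^ 2 - (pp c r) ^ 2))⁻¹
    with hΦ
  set ε : ℝ := min ((r₀ - R) / 2) ((1 - r₀) / 2) with hε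
  have hε0 : 0 < ε := by
    apply lt_min <;> [linarith [hr₀.1]; linarith [hr₀.2]]
  have hIcc_sub : Set.Icc (r₀ - ε) (r₀ + ε) ⊆ Set.Ioo R 1 := by
    intro x hx
    constructor
    · have : ε ≤ (r₀ - R) / 2 := min_le_left _ _
      linarith [hx.1]
    · have : ε ≤ (1 - r₀) / 2 := min_le_right _ _
      linarith [hx.2]
  have hx₀ : r₀ - ε ∈ Set.Icc R 1 := by
    have h1 := hIcc_sub ⟨le_refl _, by linarith⟩
    exact ⟨h1.1.le, h1.2.le⟩
  have hppx : 0 < pp c (r₀ - ε) := by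
    have h1 := hIcc_sub (⟨le_refl _, by linarith⟩ : r₀ - ε ∈ Set.Icc (r₀ - ε) (r₀ + ε))
    exact h.ppos _ hx₀ (lt_of_le_of_lt h.hR0 h1.1)
  have hδ : (0:ℝ) < 1 - (r₀ + ε) := by
    have : ε ≤ (1 - r₀) / 2 := min_le_right _ _
    linarith
  have hmaps : ∀ r ∈ Set.Ioo R 1, ∀ τ ∈ Set.Ioc (0:ℝ) 1, (1 - r) * τ + r ∈ Set.Icc R 1 := by
    intro r hrr τ hτ
    constructor
    · nlinarith [hrr.1, hrr.2, hτ.1, h.hR0]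
    · nlinarith [hrr.2, hτ.2, hτ.1]
  have hgt : ∀ r ∈ Set.Ioo R 1, ∀ τ ∈ Set.Ioc (0:ℝ) 1, r < (1 - r) * τ + r := by
    intro r hrr τ hτ
    nlinarith [hrr.2, hτ.1]
  have hCg0 : 0 ≤ Cg := le_trans (norm_nonneg _) (hCg r₀ ⟨hr₀.1.le, hr₀.2.le⟩)
  have key : ContinuousWithinAt
      (fun r => (1 - r) • ∫ τ in (0:ℝ)..1, Φ r τ) (Set.Ioo R 1) r₀ := by
    refine ContinuousWithinAt.smul (f := fun r => 1 - r)
      (g := fun r => ∫ τ in (0:ℝ)..1, Φ r τ) ?_ ?_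
    · exact (continuous_const.sub continuous_id).continuousWithinAt
    apply intervalIntegral.continuousWithinAt_of_dominated_interval
      (bound := fun τ => Cg * (Real.sqrt (m * pp c (r₀ - ε)))⁻¹ * (Real.sqrt (1 - (r₀ + ε)))⁻¹
        * (Real.sqrt (τ - 0))⁻¹)
    · -- measurability
      filter_upwards [self_mem_nhdsWithin] with r hrr
      rw [uIoc_of_le (by norm_num : (0:ℝ) ≤ 1)]
      apply ContinuousOn.aestronglyMeasurable _ measurableSet_Ioc
      have hs_cont : ContinuousOn (fun τ => (1 - r) * τ + r) (Set.Ioc (0:ℝ) 1) :=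
        ((continuous_const.mul continuous_id).add continuous_const).continuousOn
      apply ContinuousOn.mul
      · exact hgc.comp hs_cont (fun τ hτ => hmaps r hrr τ hτ)
      · apply ContinuousOn.inv₀
        · apply ContinuousOn.sqrt
          exact ((h.pcont.comp hs_cont (fun τ hτ => hmaps r hrr τ hτ)).pow 2).sub
            continuousOn_const
        · intro τ hτ
          have h1 : pp c r < pp c ((1 - r) * τ + r) :=
            h.pmono ⟨hrr.1.le, hrr.2.le⟩ (hmaps r hrr τ hτ) (hgt r hrr τ hτ)
          have h2 : 0 ≤ pp c r := h.pnonneg r ⟨hrr.1.le, hrr.2.le⟩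
          exact (Real.sqrt_pos.2 (by nlinarith)).ne'
    · -- bound
      have hball : Set.Icc (r₀ - ε) (r₀ + ε) ∈ nhds r₀ := Icc_mem_nhds (by linarith) (by linarith)
      filter_upwards [mem_nhdsWithin_of_mem_nhds hball, self_mem_nhdsWithin] with r hball' hrr
      apply Filter.Eventually.of_forall
      intro τ hτ'
      rw [uIoc_of_le (by norm_num : (0:ℝ) ≤ 1)] at hτ'
      have hrI : r ∈ Set.Icc R 1 := ⟨hrr.1.le, hrr.2.le⟩
      have hsI : (1 - r) * τ + r ∈ Set.Icc R 1 := hmaps r hrr τ hτ'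
      have hrs : r < (1 - r) * τ + r := hgt r hrr τ hτ'
      have hbd1 : (Real.sqrt ((pp c ((1 - r) * τ + r)) ^ 2 - (pp c r) ^ 2))⁻¹ ≤
          (Real.sqrt (m * pp c (r₀ - ε)))⁻¹ * (Real.sqrt ((1 - r) * τ + r - r))⁻¹ :=
        inv_sqrt_bound h hx₀ hrI hsI (by linarith [hball'.1]) hrs hppx
      have h1r : (0:ℝ) ≤ 1 - r := by linarith [hrr.2]
      have hsqrtsplit : Real.sqrt ((1 - r) * τ + r - r) = Real.sqrt (1 - r) * Real.sqrt τ := by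
        rw [add_sub_cancel_right, Real.sqrt_mul h1r]
      have h2 : (Real.sqrt (1 - r))⁻¹ ≤ (Real.sqrt (1 - (r₀ + ε)))⁻¹ :=
        inv_anti₀ (Real.sqrt_pos.2 hδ) (Real.sqrt_le_sqrt (by linarith [hball'.2]))
      have habs : |Φ r τ| ≤ Cg * ((Real.sqrt (m * pp c (r₀ - ε)))⁻¹ *
          (Real.sqrt ((1 - r) * τ + r - r))⁻¹) := by
        simp only [hΦ]
        rw [abs_mul]
        apply mul_le_mul _ _ (abs_nonneg _) hCg0
        · have := hCg _ hsI; rwa [Real.norm_eq_abs] at this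
        · rw [abs_of_nonneg (inv_nonneg.2 (Real.sqrt_nonneg _))]
          exact hbd1
      rw [Real.norm_eq_abs]
      calc |Φ r τ| ≤ Cg * ((Real.sqrt (m * pp c (r₀ - ε)))⁻¹ *
            (Real.sqrt ((1 - r) * τ + r - r))⁻¹) := habs
        _ = Cg * ((Real.sqrt (m * pp c (r₀ - ε)))⁻¹ *
            ((Real.sqrt (1 - r))⁻¹ * (Real.sqrt τ)⁻¹)) := by
            rw [hsqrtsplit, mul_inv]
        _ ≤ Cg * ((Real.sqrt (m * pp c (r₀ - ε)))⁻¹ *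
            ((Real.sqrt (1 - (r₀ + ε)))⁻¹ * (Real.sqrt τ)⁻¹)) := by
            gcongr
        _ = Cg * (Real.sqrt (m * pp c (r₀ - ε)))⁻¹ * (Real.sqrt (1 - (r₀ + ε)))⁻¹
            * (Real.sqrt (τ - 0))⁻¹ := by
            rw [sub_zero]; ring
    · -- integrability of the bound
      apply IntervalIntegrable.const_mul
      exact II_inv_sqrt_left (by norm_num)
    · -- continuity in the parameter
      apply Filter.Eventually.of_forall
      intro τ hτ'
      rw [uIoc_of_le (by norm_num : (0:ℝ) ≤ 1)] at hτ'
      have hs_cwa : ContinuousWithinAt (fun r => (1 - r) * τ + r) (Set.Ioo R 1) r₀ :=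
        (((continuous_const.sub continuous_id).mul continuous_const).add
          continuous_id).continuousWithinAt
      have hmapsr : Set.MapsTo (fun r => (1 - r) * τ + r) (Set.Ioo R 1) (Set.Icc R 1) :=
        fun r hrr => hmaps r hrr τ hτ'
      have hs₀ : (1 - r₀) * τ + r₀ ∈ Set.Icc R 1 := hmaps r₀ hr₀ τ hτ'
      have hg1 : ContinuousWithinAt (fun r => g ((1 - r) * τ + r)) (Set.Ioo R 1) r₀ := by
        have h' := ContinuousWithinAt.comp (f := fun r => (1 - r) * τ + r) (hgc _ hs₀) hs_cwa hmapsr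
        exact h'
      have hp1 : ContinuousWithinAt (fun r => pp c ((1 - r) * τ + r)) (Set.Ioo R 1) r₀ := by
        have h' := ContinuousWithinAt.comp (f := fun r => (1 - r) * τ + r) (h.pcont _ hs₀) hs_cwa hmapsr
        exact h'
      have hp2 : ContinuousWithinAt (pp c) (Set.Ioo R 1) r₀ :=
        (h.pcont r₀ ⟨hr₀.1.le, hr₀.2.le⟩).mono Ioo_subset_Icc_self
      have hden : Real.sqrt ((pp c ((1 - r₀) * τ + r₀)) ^ 2 - (pp c r₀) ^ 2) ≠ 0 := by
        have h1 : pp c r₀ < pp c ((1 - r₀) * τ + r₀) :=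
          h.pmono ⟨hr₀.1.le, hr₀.2.le⟩ hs₀ (hgt r₀ hr₀ τ hτ')
        have h2 : 0 ≤ pp c r₀ := h.pnonneg r₀ ⟨hr₀.1.le, hr₀.2.le⟩
        exact (Real.sqrt_pos.2 (by nlinarith)).ne'
      show ContinuousWithinAt (fun r => g ((1 - r) * τ + r) *
        (Real.sqrt ((pp c ((1 - r) * τ + r)) ^ 2 - (pp c r) ^ 2))⁻¹) (Set.Ioo R 1) r₀
      exact hg1.mul ((((hp1.pow 2).sub (hp2.pow 2)).sqrt).inv₀ hden)
  apply key.congr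
  · intro r hrr
    exact Afun_rep h f hrr
  · exact Afun_rep h f hr₀

/-- `Afun` vanishes on all of `(R,1)`. -/
theorem Afun_all_zero (h : Setup R c c' m) (hf : ContinuousOn f (Set.Icc R 1))
    {D : Set ℝ} (hD : D ⊆ Set.Ioo R 1) (hDdense : Set.Ioo R 1 ⊆ closure D)
    (hAf : ∀ r ∈ D, Afun c f r = 0) :
    ∀ r ∈ Set.Ioo R 1, Afun c f r = 0 := by
  intro r hr
  have hcw : ContinuousWithinAt (Afun c f) (Set.Ioo R 1) r := Afun_contWithin h hf hr
  have hne : (nhdsWithin r D).NeBot := mem_closure_iff_nhdsWithin_neBot.1 (hDdense hr)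
  have h1 : Filter.Tendsto (Afun c f) (nhdsWithin r D) (nhds (Afun c f r)) :=
    hcw.mono_left (nhdsWithin_mono r hD)
  have h2 : Filter.Tendsto (Afun c f) (nhdsWithin r D) (nhds 0) := by
    apply Filter.Tendsto.congr' _ tendsto_const_nhds
    filter_upwards [self_mem_nhdsWithin] with x hx
    exact (hAf x hx).symm
  exact tendsto_nhds_unique h1 h2





variable {R m : ℝ} {c c' : ℝ → ℝ}

/-- The inner Abel kernel integral equals `π/2`. -/
theorem pi_half (h : Setup R c c' m) {t s : ℝ} (ht : t ∈ Set.Ioo R 1)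
    (hs : s ∈ Set.Icc R 1) (hts : t < s) :
    ∫ r in t..s, qq c c' r * pp c r *
      ((Real.sqrt ((pp c r) ^ 2 - (pp c t) ^ 2))⁻¹ *
       (Real.sqrt ((pp c s) ^ 2 - (pp c r) ^ 2))⁻¹) = π / 2 := by
  have htI : t ∈ Set.Icc R 1 := ⟨ht.1.le, ht.2.le⟩
  set a : ℝ := pp c t with ha
  set b : ℝ := pp c s with hb
  have ha0 : 0 < a := h.ppos t htI (lt_of_le_of_lt h.hR0 ht.1)
  have hab : a < b := h.pmono htI hs hts
  have hb0 : 0 < b := lt_trans ha0 hab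
  have hba : (0:ℝ) < b ^ 2 - a ^ 2 := by nlinarith
  set ψ : ℝ → ℝ := fun r =>
    Real.arcsin ((2 * (pp c r) ^ 2 - a ^ 2 - b ^ 2) / (b ^ 2 - a ^ 2)) with hψ
  set G : ℝ → ℝ := fun r => qq c c' r * pp c r *
      ((Real.sqrt ((pp c r) ^ 2 - a ^ 2))⁻¹ *
       (Real.sqrt (b ^ 2 - (pp c r) ^ 2))⁻¹) with hG
  -- membership facts
  have hsubI : Set.Icc t s ⊆ Set.Icc R 1 := fun x hx => ⟨ht.1.le.trans hx.1, hx.2.trans hs.2⟩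
  have hmem : ∀ r ∈ Set.Ioo t s, r ∈ Set.Ioo R 1 :=
    fun r hr => ⟨ht.1.trans hr.1, lt_of_lt_of_le hr.2 hs.2⟩
  have hppr : ∀ r ∈ Set.Ioo t s, a < pp c r ∧ pp c r < b := by
    intro r hr
    have hrI : r ∈ Set.Icc R 1 := hsubI ⟨hr.1.le, hr.2.le⟩
    exact ⟨h.pmono htI hrI hr.1, h.pmono hrI hs hr.2⟩
  -- the derivative identity
  have hderiv : ∀ r ∈ Set.Ioo t s, HasDerivAt ψ (2 * G r) r := by
    intro r hr
    have hrI : r ∈ Set.Icc R 1 := hsubI ⟨hr.1.le, hr.2.le⟩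
    obtain ⟨hra, hrb⟩ := hppr r hr
    have hpd : HasDerivAt (pp c) (qq c c' r) r := h.phasDerivAt (hmem r hr)
    have hXd : HasDerivAt (fun r => (2 * (pp c r) ^ 2 - a ^ 2 - b ^ 2) / (b ^ 2 - a ^ 2))
        (4 * pp c r * qq c c' r / (b ^ 2 - a ^ 2)) r := by
      have h1 : HasDerivAt (fun r => (pp c r) ^ 2)
          ((2 : ℕ) * (pp c r) ^ 1 * qq c c' r) r := hpd.pow 2
      have h2 := ((h1.const_mul 2).sub_const (a ^ 2)).sub_const (b ^ 2)
      have h3 := h2.div_const (b ^ 2 - a ^ 2)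
      rw [show 4 * pp c r * qq c c' r / (b ^ 2 - a ^ 2) =
          2 * (((2 : ℕ) : ℝ) * (pp c r) ^ 1 * qq c c' r) / (b ^ 2 - a ^ 2) by push_cast; ring]
      exact h3
    set X : ℝ := (2 * (pp c r) ^ 2 - a ^ 2 - b ^ 2) / (b ^ 2 - a ^ 2) with hX
    have hX1 : -1 < X := by
      rw [hX, lt_div_iff₀ hba]
      nlinarith
    have hX2 : X < 1 := by
      rw [hX, div_lt_iff₀ hba]
      nlinarith
    have harc := Real.hasDerivAt_arcsin (ne_of_gt hX1) (ne_of_lt hX2)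
    have hcomp := harc.comp r hXd
    have hA : (0:ℝ) < (pp c r) ^ 2 - a ^ 2 := by nlinarith
    have hB : (0:ℝ) < b ^ 2 - (pp c r) ^ 2 := by nlinarith [h.pnonneg r hrI]
    have hsA : (0:ℝ) < Real.sqrt ((pp c r) ^ 2 - a ^ 2) := Real.sqrt_pos.2 hA
    have hsB : (0:ℝ) < Real.sqrt (b ^ 2 - (pp c r) ^ 2) := Real.sqrt_pos.2 hB
    have h1X : 1 - X ^ 2 =
        4 * ((pp c r) ^ 2 - a ^ 2) * (b ^ 2 - (pp c r) ^ 2) / (b ^ 2 - a ^ 2) ^ 2 := by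
      rw [hX]
      field_simp
      ring
    have hs4 : Real.sqrt (1 - X ^ 2) =
        2 * Real.sqrt ((pp c r) ^ 2 - a ^ 2) * Real.sqrt (b ^ 2 - (pp c r) ^ 2)
          / (b ^ 2 - a ^ 2) := by
      rw [h1X]
      rw [show 4 * ((pp c r) ^ 2 - a ^ 2) * (b ^ 2 - (pp c r) ^ 2) / (b ^ 2 - a ^ 2) ^ 2 =
          (2 * Real.sqrt ((pp c r) ^ 2 - a ^ 2) * Real.sqrt (b ^ 2 - (pp c r) ^ 2)
            / (b ^ 2 - a ^ 2)) ^ 2 from by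
        rw [div_pow, mul_pow, mul_pow, Real.sq_sqrt hA.le, Real.sq_sqrt hB.le]
        ring]
      exact Real.sqrt_sq (by positivity)
    have hval : 1 / Real.sqrt (1 - X ^ 2) * (4 * pp c r * qq c c' r / (b ^ 2 - a ^ 2)) =
        2 * G r := by
      rw [hs4, hG]
      field_simp
      ring
    rw [hψ]
    rw [← hval]
    exact hcomp
  -- continuity of the antiderivative
  have hcont : ContinuousOn ψ (Set.Icc t s) := by
    apply Real.continuous_arcsin.comp_continuousOn
    apply ContinuousOn.div_const
    apply ContinuousOn.sub
    apply ContinuousOn.sub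
    · exact continuousOn_const.mul (((h.pcont.mono hsubI).pow 2))
    · exact continuousOn_const
    · exact continuousOn_const
  -- interval integrability of the integrand
  have hint : IntervalIntegrable (fun r => 2 * G r) volume t s := by
    apply IntervalIntegrable.const_mul
    obtain ⟨Cq, hCq⟩ := isCompact_Icc.exists_bound_of_continuousOn (h.qcont.mul h.pcont)
    have hCq0 : 0 ≤ Cq := le_trans (norm_nonneg _) (hCq t htI)
    apply II_of_bound (C := Cq * ((Real.sqrt (m * a))⁻¹ * (Real.sqrt (m * a))⁻¹)) hts
    · -- continuity on the open interval
      apply ContinuousOn.mul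
      · exact (h.qcont.mul h.pcont).mono (fun x hx => hsubI ⟨hx.1.le, hx.2.le⟩)
      apply ContinuousOn.mul
      · apply ContinuousOn.inv₀
        · exact (((h.pcont.mono (fun x hx => hsubI ⟨hx.1.le, hx.2.le⟩)).pow 2).sub
            continuousOn_const).sqrt
        · intro r hr
          obtain ⟨hra, _⟩ := hppr r hr
          exact (Real.sqrt_pos.2 (by nlinarith)).ne'
      · apply ContinuousOn.inv₀
        · exact (continuousOn_const.sub
            ((h.pcont.mono (fun x hx => hsubI ⟨hx.1.le, hx.2.le⟩)).pow 2)).sqrt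
        · intro r hr
          obtain ⟨hra, hrb⟩ := hppr r hr
          have : 0 ≤ pp c r := h.pnonneg r (hsubI ⟨hr.1.le, hr.2.le⟩)
          exact (Real.sqrt_pos.2 (by nlinarith)).ne'
    · -- the bound
      intro r hr
      have hrI : r ∈ Set.Icc R 1 := hsubI ⟨hr.1.le, hr.2.le⟩
      have hb1 : (Real.sqrt ((pp c r) ^ 2 - a ^ 2))⁻¹ ≤
          (Real.sqrt (m * a))⁻¹ * (Real.sqrt (r - t))⁻¹ :=
        inv_sqrt_bound h htI htI hrI le_rfl hr.1 ha0
      have hb2 : (Real.sqrt (b ^ 2 - (pp c r) ^ 2))⁻¹ ≤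
          (Real.sqrt (m * a))⁻¹ * (Real.sqrt (s - r))⁻¹ :=
        inv_sqrt_bound h htI hrI hs hr.1.le hr.2 ha0
      have hq : |qq c c' r * pp c r| ≤ Cq := by
        have := hCq r hrI; rwa [Real.norm_eq_abs] at this
      rw [abs_mul]
      have h3 : |(Real.sqrt ((pp c r) ^ 2 - a ^ 2))⁻¹ * (Real.sqrt (b ^ 2 - (pp c r) ^ 2))⁻¹| =
          (Real.sqrt ((pp c r) ^ 2 - a ^ 2))⁻¹ * (Real.sqrt (b ^ 2 - (pp c r) ^ 2))⁻¹ :=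
        abs_of_nonneg (by positivity)
      rw [h3]
      calc |qq c c' r * pp c r| * ((Real.sqrt ((pp c r) ^ 2 - a ^ 2))⁻¹ *
            (Real.sqrt (b ^ 2 - (pp c r) ^ 2))⁻¹)
          ≤ Cq * (((Real.sqrt (m * a))⁻¹ * (Real.sqrt (r - t))⁻¹) *
            ((Real.sqrt (m * a))⁻¹ * (Real.sqrt (s - r))⁻¹)) := by
            apply mul_le_mul hq _ (by positivity) hCq0
            exact mul_le_mul hb1 hb2 (by positivity) (by positivity)
        _ = Cq * ((Real.sqrt (m * a))⁻¹ * (Real.sqrt (m * a))⁻¹) *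
            ((Real.sqrt (r - t))⁻¹ * (Real.sqrt (s - r))⁻¹) := by ring
  -- apply FTC
  have hFTC := intervalIntegral.integral_eq_sub_of_hasDeriv_right_of_le hts.le hcont
    (fun x hx => (hderiv x hx).hasDerivWithinAt) hint
  have hψs : ψ s = π / 2 := by
    rw [hψ]
    simp only
    rw [show (2 * (pp c s) ^ 2 - a ^ 2 - b ^ 2) / (b ^ 2 - a ^ 2) = 1 from by
      rw [← hb]; field_simp; ring]
    exact Real.arcsin_one
  have hψt : ψ t = -(π / 2) := by
    rw [hψ]
    simp only
    rw [show (2 * (pp c t) ^ 2 - a ^ 2 - b ^ 2) / (b ^ 2 - a ^ 2) = -1 from by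
      rw [← ha]; field_simp; ring]
    exact Real.arcsin_neg_one
  rw [hψs, hψt] at hFTC
  have h2G : (∫ r in t..s, 2 * G r) = 2 * ∫ r in t..s, G r := by
    exact intervalIntegral.integral_const_mul 2 G
  rw [h2G] at hFTC
  have : (∫ r in t..s, G r) = π / 2 := by linarith
  rw [hG] at this
  exact this





variable {R m : ℝ} {c c' f : ℝ → ℝ}

/-- Bound on the integral of the one-sided inverse-sqrt kernel. -/
theorem int_inv_sqrt_le {r : ℝ} (hr0 : 0 ≤ r) (hr : r ≤ 1) :
    ∫ s in Set.Ioc r 1, (Real.sqrt (s - r))⁻¹ ≤ 2 := by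
  have h1 : ∫ s in Set.Ioc r 1, (Real.sqrt (s - r))⁻¹ =
      ∫ s in r..1, (Real.sqrt (s - r))⁻¹ := (intervalIntegral.integral_of_le hr).symm
  have h2 : (∫ s in r..1, (Real.sqrt (s - r))⁻¹) =
      ∫ s in r..1, (fun x : ℝ => x ^ (-(1/2) : ℝ)) (s - r) := by
    apply intervalIntegral.integral_congr_ae
    apply Filter.Eventually.of_forall
    intro s hs
    rw [uIoc_of_le hr] at hs
    have : (0:ℝ) ≤ s - r := by linarith [hs.1]
    show (Real.sqrt (s - r))⁻¹ = (s - r) ^ (-(1/2) : ℝ)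
    rw [Real.sqrt_eq_rpow, Real.rpow_neg this]
  rw [h1, h2, intervalIntegral.integral_comp_sub_right (fun x : ℝ => x ^ (-(1/2) : ℝ)) r,
    sub_self]
  rw [integral_rpow (Or.inl (by norm_num))]
  have h3 : (0:ℝ) ^ (-(1/2) + 1 : ℝ) = 0 := Real.zero_rpow (by norm_num)
  rw [h3]
  have h4 : (1 - r : ℝ) ^ (-(1/2) + 1 : ℝ) ≤ 1 :=
    Real.rpow_le_one (by linarith) (by linarith) (by norm_num)
  rw [show (-(1/2 : ℝ) + 1) = (1/2 : ℝ) by norm_num] at h4 ⊢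
  linarith [h4]

/-- The key Fubini computation: if `Afun` vanishes on `(R,1)`, then the primitive
of `f·p/c` vanishes. -/
theorem H_zero (h : Setup R c c' m) (hf : ContinuousOn f (Set.Icc R 1))
    {t : ℝ} (ht : t ∈ Set.Ioo R 1)
    (hAzero : ∀ r ∈ Set.Ioo R 1, Afun c f r = 0) :
    ∫ s in Set.Ioc t 1, (f s / c s * pp c s) = 0 := by
  have htI : t ∈ Set.Icc R 1 := ⟨ht.1.le, ht.2.le⟩
  have ht0 : 0 < t := lt_of_le_of_lt h.hR0 ht.1
  set g : ℝ → ℝ := fun s => f s / c s * pp c s with hg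
  have hgc : ContinuousOn g (Set.Icc R 1) := gcont h hf
  set a : ℝ := pp c t with ha
  have ha0 : 0 < a := h.ppos t htI ht0
  set κ : ℝ := (Real.sqrt (m * a))⁻¹ with hκ
  have hκ0 : 0 ≤ κ := inv_nonneg.2 (Real.sqrt_nonneg _)
  set W : ℝ → ℝ := fun r => qq c c' r * pp c r *
    (Real.sqrt ((pp c r) ^ 2 - a ^ 2))⁻¹ with hW
  set K : ℝ → ℝ → ℝ := fun r s => (Real.sqrt ((pp c s) ^ 2 - (pp c r) ^ 2))⁻¹ with hK
  set μ : Measure ℝ := volume.restrict (Set.Ioc t 1) with hμ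
  set fbar : ℝ → ℝ → ℝ := fun r s =>
    Set.indicator (Set.Ioi r) (fun s' => W r * (g s' * K r s')) s with hfbar
  -- ae membership
  have hae : ∀ᵐ r ∂μ, r ∈ Set.Ioo t 1 := by
    have h1 : ∀ᵐ r ∂μ, r ∈ Set.Ioc t 1 := ae_restrict_mem measurableSet_Ioc
    have h2' : ∀ᵐ r ∂(volume : Measure ℝ), r ≠ 1 := by
      rw [ae_iff]
      convert volume_singleton (a := (1:ℝ)) using 2
      ext x
      simp
    have h2 : ∀ᵐ r ∂μ, r ≠ 1 := h2'.filter_mono (ae_mono Measure.restrict_le_self)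
    filter_upwards [h1, h2] with r hr hne
    exact ⟨hr.1, lt_of_le_of_ne hr.2 hne⟩
  -- subset facts
  have hsub : Set.Ioc t 1 ⊆ Set.Icc R 1 := fun x hx => ⟨ht.1.le.trans hx.1.le, hx.2⟩
  -- continuity of W on Ioc t 1
  have hWcont : ContinuousOn W (Set.Ioc t 1) := by
    apply ContinuousOn.mul
    · exact (h.qcont.mul h.pcont).mono hsub
    apply ContinuousOn.inv₀
    · exact (((h.pcont.mono hsub).pow 2).sub continuousOn_const).sqrt
    · intro r hr
      have hrI : r ∈ Set.Icc R 1 := hsub hr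
      have h1 : a < pp c r := h.pmono htI hrI hr.1
      exact (Real.sqrt_pos.2 (by nlinarith)).ne'
  -- bounds
  obtain ⟨Cg, hCg⟩ := isCompact_Icc.exists_bound_of_continuousOn hgc
  obtain ⟨Cq, hCq⟩ := isCompact_Icc.exists_bound_of_continuousOn (h.qcont.mul h.pcont)
  have hCg0 : 0 ≤ Cg := le_trans (norm_nonneg _) (hCg t htI)
  have hCq0 : 0 ≤ Cq := le_trans (norm_nonneg _) (hCq t htI)
  have hWbd : ∀ r ∈ Set.Ioo t 1, |W r| ≤ Cq * κ * (Real.sqrt (r - t))⁻¹ := by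
    intro r hr
    have hrI : r ∈ Set.Icc R 1 := hsub ⟨hr.1, hr.2.le⟩
    rw [hW]
    simp only
    rw [abs_mul]
    have h1 : |(Real.sqrt ((pp c r) ^ 2 - a ^ 2))⁻¹| ≤ κ * (Real.sqrt (r - t))⁻¹ := by
      rw [abs_of_nonneg (by positivity)]
      exact inv_sqrt_bound h htI htI hrI le_rfl hr.1 ha0
    calc |qq c c' r * pp c r| * |(Real.sqrt ((pp c r) ^ 2 - a ^ 2))⁻¹|
        ≤ Cq * (κ * (Real.sqrt (r - t))⁻¹) := by
          apply mul_le_mul _ h1 (abs_nonneg _) hCq0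
          have := hCq r hrI; rwa [Real.norm_eq_abs] at this
      _ = Cq * κ * (Real.sqrt (r - t))⁻¹ := by ring
  have hKbd : ∀ r ∈ Set.Ioo t 1, ∀ s ∈ Set.Ioc r 1,
      ‖g s * K r s‖ ≤ Cg * κ * (Real.sqrt (s - r))⁻¹ := by
    intro r hr s hs
    have hrI : r ∈ Set.Icc R 1 := hsub ⟨hr.1, hr.2.le⟩
    have hsI : s ∈ Set.Icc R 1 := hsub ⟨hr.1.trans hs.1, hs.2⟩
    rw [Real.norm_eq_abs, abs_mul]
    have h1 : |K r s| ≤ κ * (Real.sqrt (s - r))⁻¹ := by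
      rw [hK]
      simp only
      rw [abs_of_nonneg (by positivity)]
      exact inv_sqrt_bound h htI hrI hsI hr.1.le hs.1 ha0
    calc |g s| * |K r s| ≤ Cg * (κ * (Real.sqrt (s - r))⁻¹) := by
          apply mul_le_mul _ h1 (abs_nonneg _) hCg0
          have := hCg s hsI; rwa [Real.norm_eq_abs] at this
      _ = Cg * κ * (Real.sqrt (s - r))⁻¹ := by ring
  -- section integrability
  have hsec : ∀ r ∈ Set.Ioo t 1,
      IntervalIntegrable (fun s => g s * K r s) volume r 1 := by
    intro r hr
    exact II_kernel_right h hgc ⟨ht.1.trans hr.1, hr.2⟩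
  -- the inner set identity
  have hIoi_inter : ∀ r ∈ Set.Ioo t 1, Set.Ioi r ∩ Set.Ioc t 1 = Set.Ioc r 1 := by
    intro r hr
    ext x
    simp only [Set.mem_inter_iff, Set.mem_Ioi, Set.mem_Ioc]
    constructor
    · rintro ⟨h1, _, h3⟩; exact ⟨h1, h3⟩
    · rintro ⟨h1, h2⟩; exact ⟨h1, hr.1.trans h1, h2⟩
  have hIio_inter : ∀ s ∈ Set.Ioc t 1, Set.Iio s ∩ Set.Ioc t 1 = Set.Ioo t s := by
    intro s hs
    ext x
    simp only [Set.mem_inter_iff, Set.mem_Iio, Set.mem_Ioc, Set.mem_Ioo]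
    constructor
    · rintro ⟨h1, h2, _⟩; exact ⟨h2, h1⟩
    · rintro ⟨h1, h2⟩; exact ⟨h2, h1, (le_of_lt h2).trans hs.2⟩
  -- global measurability
  have hU : MeasurableSet {z : ℝ × ℝ | z.1 < z.2} :=
    measurableSet_lt measurable_fst measurable_snd
  have hSm : MeasurableSet (Set.Ioc t 1 ×ˢ Set.Ioc t 1) :=
    measurableSet_Ioc.prod measurableSet_Ioc
  have huncurry : Function.uncurry fbar =
      Set.indicator {z : ℝ × ℝ | z.1 < z.2}
        (fun z => W z.1 * (g z.2 * K z.1 z.2)) := by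
    funext z
    rcases z with ⟨r, s⟩
    simp only [Function.uncurry, hfbar, Set.indicator_apply, Set.mem_Ioi, Set.mem_setOf_eq]
  have h1f : AEStronglyMeasurable (Function.uncurry fbar) (μ.prod μ) := by
    rw [huncurry, hμ, Measure.prod_restrict]
    rw [aestronglyMeasurable_indicator_iff hU]
    rw [Measure.restrict_restrict hU]
    apply ContinuousOn.aestronglyMeasurable _ (hU.inter hSm)
    have hmem : ∀ z : ℝ × ℝ, z ∈ {z : ℝ × ℝ | z.1 < z.2} ∩ (Set.Ioc t 1 ×ˢ Set.Ioc t 1) →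
        z.1 ∈ Set.Ioc t 1 ∧ z.2 ∈ Set.Ioc t 1 ∧ z.1 < z.2 := by
      intro z hz
      exact ⟨hz.2.1, hz.2.2, hz.1⟩
    apply ContinuousOn.mul
    · apply ContinuousOn.comp (f := Prod.fst) hWcont continuous_fst.continuousOn
      intro z hz; exact (hmem z hz).1
    apply ContinuousOn.mul
    · apply ContinuousOn.comp (f := Prod.snd) (hgc.mono hsub) continuous_snd.continuousOn
      intro z hz; exact (hmem z hz).2.1
    · apply ContinuousOn.inv₀
      · apply ContinuousOn.sqrt
        apply ContinuousOn.sub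
        · apply ContinuousOn.pow
          apply ContinuousOn.comp (f := Prod.snd) (h.pcont.mono hsub) continuous_snd.continuousOn
          intro z hz; exact (hmem z hz).2.1
        · apply ContinuousOn.pow
          apply ContinuousOn.comp (f := Prod.fst) (h.pcont.mono hsub) continuous_fst.continuousOn
          intro z hz; exact (hmem z hz).1
      · intro z hz
        obtain ⟨hz1, hz2, hz12⟩ := hmem z hz
        have h1 : pp c z.1 < pp c z.2 := h.pmono (hsub hz1) (hsub hz2) hz12
        have h2 : 0 ≤ pp c z.1 := h.pnonneg _ (hsub hz1)
        exact (Real.sqrt_pos.2 (by nlinarith)).ne'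
  -- inner integral evaluation (in s)
  have hinner : ∀ r ∈ Set.Ioo t 1, (∫ s, fbar r s ∂μ) = W r * Afun c f r := by
    intro r hr
    have hr1 : r ≤ 1 := hr.2.le
    rw [hfbar]
    simp only
    rw [hμ, MeasureTheory.integral_indicator measurableSet_Ioi, Measure.restrict_restrict measurableSet_Ioi,
      hIoi_inter r hr]
    rw [show ∫ s in Set.Ioc r 1, W r * (g s * K r s) =
        W r * ∫ s in Set.Ioc r 1, g s * K r s from integral_const_mul _ _]
    congr 1
    rw [← intervalIntegral.integral_of_le hr1]
    exact (Afun_eq h f ⟨ht.1.trans hr.1, hr.2⟩).symm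
  -- outer integral (in r) of inner = 0
  have hLHS : (∫ r, ∫ s, fbar r s ∂μ ∂μ) = 0 := by
    rw [show (0:ℝ) = ∫ _, (0:ℝ) ∂μ from (integral_zero _ _).symm]
    apply MeasureTheory.integral_congr_ae
    filter_upwards [hae] with r hr
    rw [hinner r hr, hAzero r ⟨ht.1.trans hr.1, hr.2⟩, mul_zero]
  -- integrability on the product
  have hInt : Integrable (Function.uncurry fbar) (μ.prod μ) := by
    rw [integrable_prod_iff h1f]
    constructor
    · -- sections
      filter_upwards [hae] with r hr
      have : Integrable (fun s => fbar r s) μ := by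
        rw [hfbar, hμ]
        simp only
        rw [integrable_indicator_iff measurableSet_Ioi]
        rw [IntegrableOn, Measure.restrict_restrict measurableSet_Ioi, hIoi_inter r hr]
        have h1 : IntegrableOn (fun s => g s * K r s) (Set.Ioc r 1) volume := by
          have := hsec r hr
          rwa [intervalIntegrable_iff_integrableOn_Ioc_of_le hr.2.le] at this
        exact h1.const_mul _
      exact this
    · -- integral of norms
      have hbound : ∀ᵐ r ∂μ, ‖∫ s, ‖fbar r s‖ ∂μ‖ ≤
          (Cq * κ * (Cg * κ * 2)) * (Real.sqrt (r - t))⁻¹ := by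
        filter_upwards [hae] with r hr
        have hr0 : 0 < r := lt_trans ht0 hr.1
        -- compute the inner norm integral
        have hnorm_eq : (∫ s, ‖fbar r s‖ ∂μ) =
            |W r| * ∫ s in Set.Ioc r 1, ‖g s * K r s‖ := by
          rw [hfbar, hμ]
          simp only
          rw [show (fun s => ‖Set.indicator (Set.Ioi r) (fun s' => W r * (g s' * K r s')) s‖) =
              Set.indicator (Set.Ioi r) (fun s' => ‖W r * (g s' * K r s')‖) from by
            funext s
            rw [norm_indicator_eq_indicator_norm]]
          rw [MeasureTheory.integral_indicator measurableSet_Ioi,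
            Measure.restrict_restrict measurableSet_Ioi, hIoi_inter r hr]
          rw [show (fun s => ‖W r * (g s * K r s)‖) = fun s => |W r| * ‖g s * K r s‖ from by
            funext s
            rw [norm_mul, Real.norm_eq_abs]]
          exact integral_const_mul _ _
        have hintn : IntegrableOn (fun s => ‖g s * K r s‖) (Set.Ioc r 1) volume := by
          have := (hsec r hr).norm
          rwa [intervalIntegrable_iff_integrableOn_Ioc_of_le hr.2.le] at this
        have hintd : IntegrableOn (fun s => Cg * κ * (Real.sqrt (s - r))⁻¹)
            (Set.Ioc r 1) volume := by
          have := (II_inv_sqrt_left (a := r) (b := 1) hr.2.le).const_mul (Cg * κ)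
          rwa [intervalIntegrable_iff_integrableOn_Ioc_of_le hr.2.le] at this
        have hmono : (∫ s in Set.Ioc r 1, ‖g s * K r s‖) ≤
            ∫ s in Set.Ioc r 1, Cg * κ * (Real.sqrt (s - r))⁻¹ := by
          apply integral_mono_ae hintn hintd
          filter_upwards [ae_restrict_mem measurableSet_Ioc] with s hs
          exact hKbd r hr s hs
        have hint2 : (∫ s in Set.Ioc r 1, Cg * κ * (Real.sqrt (s - r))⁻¹) ≤ Cg * κ * 2 := by
          rw [MeasureTheory.integral_const_mul]
          apply mul_le_mul_of_nonneg_left _ (by positivity)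
          exact int_inv_sqrt_le hr0.le hr.2.le
        have hnn : (0:ℝ) ≤ ∫ s in Set.Ioc r 1, ‖g s * K r s‖ :=
          integral_nonneg (fun s => norm_nonneg _)
        rw [hnorm_eq, Real.norm_eq_abs, abs_of_nonneg (mul_nonneg (abs_nonneg _) hnn)]
        calc |W r| * ∫ s in Set.Ioc r 1, ‖g s * K r s‖
            ≤ (Cq * κ * (Real.sqrt (r - t))⁻¹) * (Cg * κ * 2) := by
              apply mul_le_mul (hWbd r hr) (le_trans hmono hint2) hnn
              positivity
          _ = (Cq * κ * (Cg * κ * 2)) * (Real.sqrt (r - t))⁻¹ := by ring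
      have hintb : Integrable (fun r => (Cq * κ * (Cg * κ * 2)) * (Real.sqrt (r - t))⁻¹) μ := by
        rw [hμ]
        have := (II_inv_sqrt_left (a := t) (b := 1) ht.2.le).const_mul (Cq * κ * (Cg * κ * 2))
        rwa [intervalIntegrable_iff_integrableOn_Ioc_of_le ht.2.le] at this
      exact hintb.mono h1f.norm.integral_prod_right' (hbound.mono (fun r hr => hr.trans (le_abs_self _)))
  -- swap
  have hswap := integral_integral_swap hInt
  -- outer integral evaluation (in r), after swapping
  have houter : ∀ s ∈ Set.Ioc t 1, (∫ r, fbar r s ∂μ) = g s * (π / 2) := by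
    intro s hs
    have hind : (fun r => fbar r s) =
        Set.indicator (Set.Iio s) (fun r => W r * (g s * K r s)) := by
      funext r
      rw [hfbar]
      simp only [Set.indicator_apply, Set.mem_Ioi, Set.mem_Iio]
    rw [hind, hμ, MeasureTheory.integral_indicator measurableSet_Iio,
      Measure.restrict_restrict measurableSet_Iio, hIio_inter s hs]
    have hpi := pi_half h ht (hsub hs) hs.1
    have heq : (∫ r in Set.Ioo t s, W r * (g s * K r s)) =
        g s * ∫ r in Set.Ioo t s, W r * K r s := by
      rw [← MeasureTheory.integral_const_mul]
      congr 1
      funext r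
      ring
    rw [heq]
    congr 1
    rw [← integral_Ioc_eq_integral_Ioo, ← intervalIntegral.integral_of_le hs.1.le]
    rw [← hpi]
    apply intervalIntegral.integral_congr
    intro r _
    rw [hW, hK]
    simp only
    ring
  -- conclude
  have hRHS : (∫ s, ∫ r, fbar r s ∂μ ∂μ) = (∫ s in Set.Ioc t 1, g s) * (π / 2) := by
    rw [show (∫ s in Set.Ioc t 1, g s) * (π / 2) = ∫ s in Set.Ioc t 1, g s * (π / 2) from
      (MeasureTheory.integral_mul_const _ _).symm]
    apply MeasureTheory.integral_congr_ae
    filter_upwards [ae_restrict_mem measurableSet_Ioc] with s hs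
    exact houter s hs
  rw [hLHS] at hswap
  rw [hRHS] at hswap
  have hπ : (π / 2 : ℝ) ≠ 0 := by positivity
  have := hswap.symm
  exact (mul_eq_zero.1 this).resolve_right hπ




variable {R m : ℝ} {c c' f : ℝ → ℝ}

/-- If `f` is continuous on `[R,1]` and vanishes on `(R,1)`, it vanishes on `[R,1]`. -/
theorem zero_on_Icc (hR1 : R < 1) (hf : ContinuousOn f (Set.Icc R 1))
    (h0 : ∀ r ∈ Set.Ioo R 1, f r = 0) : ∀ r ∈ Set.Icc R 1, f r = 0 := by
  intro r hr
  have hcl : r ∈ closure (Set.Ioo R 1) := by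
    rw [closure_Ioo (ne_of_lt hR1)]; exact hr
  have hne := mem_closure_iff_nhdsWithin_neBot.1 hcl
  have h1 : Filter.Tendsto f (nhdsWithin r (Set.Ioo R 1)) (nhds (f r)) :=
    (hf r hr).mono Set.Ioo_subset_Icc_self
  have h2 : Filter.Tendsto f (nhdsWithin r (Set.Ioo R 1)) (nhds 0) := by
    apply Filter.Tendsto.congr' _ tendsto_const_nhds
    filter_upwards [self_mem_nhdsWithin] with x hx
    exact (h0 x hx).symm
  exact tendsto_nhds_unique h1 h2

/-- `f` vanishes on the open interval. -/
theorem f_zero_on_Ioo (h : Setup R c c' m) (hf : ContinuousOn f (Set.Icc R 1))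
    (hH : ∀ t ∈ Set.Ioo R 1, (∫ s in Set.Ioc t 1, (f s / c s * pp c s)) = 0) :
    ∀ t ∈ Set.Ioo R 1, f t = 0 := by
  intro t₀ ht₀
  set g : ℝ → ℝ := fun s => f s / c s * pp c s with hg
  have hgc : ContinuousOn g (Set.Icc R 1) := gcont h hf
  have hgIoo : ContinuousOn g (Set.Ioo R 1) := hgc.mono Set.Ioo_subset_Icc_self
  have hII : IntervalIntegrable g volume t₀ 1 := by
    apply ContinuousOn.intervalIntegrable
    rw [uIcc_of_le ht₀.2.le]
    exact hgc.mono (fun x hx => ⟨ht₀.1.le.trans hx.1, hx.2⟩)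
  have hca : ContinuousAt g t₀ :=
    hgc.continuousAt (Icc_mem_nhds ht₀.1 ht₀.2)
  have hmeas : StronglyMeasurableAtFilter g (nhds t₀) volume :=
    hgIoo.stronglyMeasurableAtFilter isOpen_Ioo t₀ ht₀
  have hFTC := intervalIntegral.integral_hasDerivAt_left hII hmeas hca
  have hzero : (fun u => ∫ x in u..1, g x) =ᶠ[nhds t₀] (fun _ => (0:ℝ)) := by
    filter_upwards [IsOpen.mem_nhds isOpen_Ioo ht₀] with u hu
    rw [intervalIntegral.integral_of_le hu.2.le]
    exact hH u hu
  have hzero' : HasDerivAt (fun _ => (0:ℝ)) (-g t₀) t₀ := hFTC.congr_of_eventuallyEq hzero.symm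
  have huniq : -g t₀ = 0 := hzero'.unique (hasDerivAt_const t₀ 0)
  have hgt : g t₀ = 0 := by linarith [huniq, neg_eq_zero.1 huniq]
  have hppt : 0 < pp c t₀ :=
    h.ppos t₀ ⟨ht₀.1.le, ht₀.2.le⟩ (lt_of_le_of_lt h.hR0 ht₀.1)
  have hct : 0 < c t₀ := h.hpos t₀ ⟨ht₀.1.le, ht₀.2.le⟩
  rw [hg] at hgt
  simp only at hgt
  rcases mul_eq_zero.1 hgt with h1 | h2
  · rcases div_eq_zero_iff.1 h1 with h3 | h4
    · exact h3
    · exact absurd h4 hct.ne'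
  · exact absurd h2 hppt.ne'

end S10

theorem stmt10 (R : ℝ) (hR0 : 0 ≤ R) (hR1 : R < 1) (c : ℝ → ℝ)
    (hpos : ∀ r ∈ Set.Icc R 1, 0 < c r)
    (hC11 : IsC11On c R) (hHerg : HerglotzCond c R)
    (f : ℝ → ℝ) (hf : ContinuousOn f (Set.Icc R 1))
    (D : Set ℝ) (hD : D ⊆ Set.Ioo R 1) (hDdense : Set.Ioo R 1 ⊆ closure D)
    (hAf : ∀ r ∈ D, Afun c f r = 0) :
    ∀ r ∈ Set.Icc R 1, f r = 0 := by
  obtain ⟨c', m, h⟩ := S10.setup_exists R hR0 hR1 c hpos hC11 hHerg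
  have hAzero : ∀ r ∈ Set.Ioo R 1, Afun c f r = 0 :=
    S10.Afun_all_zero h hf hD hDdense hAf
  have hH : ∀ t ∈ Set.Ioo R 1, (∫ s in Set.Ioc t 1, (f s / c s * S10.pp c s)) = 0 :=
    fun t ht => S10.H_zero h hf ht hAzero
  exact S10.zero_on_Icc hR1 hf (S10.f_zero_on_Ioo h hf hH)
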